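/- arXiv:math/9202205 — 3 statements merged into one kernel-verified Lean document; each statement's English description precedes it below -/
import Mathlib

section
/- Let γ be an ordinal closed under ordinal addition, let x ∈ θ_γ be a finite sequence of length n, and let α < γ. Let A^α_x be the set of all y ∈ θ_γ such that (i) x is an initial segment of y (not necessarily proper), and (ii) if length(y) > n then y(n) ≥ α. Then A^α_x, with the ordering of θ_γ restricted to it, is order isomorphic to θ_γ. -/
/-- The carrier of the linear order `θ_γ`: finite sequences of ordinals `< γ`. -/
def ThetaCarrier (γ : Ordinal) : Type _ := {l : List Ordinal // ∀ o ∈ l, o < γ}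

/-- The strict order of `θ_γ` on underlying lists: `x < y` iff `y` is a proper initial
segment of `x`, or there is `n < min (length x) (length y)` with `x↾n = y↾n` and
`x(n) < y(n)`. -/
def thetaLt (x y : List Ordinal) : Prop :=
  (y <+: x ∧ y ≠ x) ∨
    ∃ (n : ℕ) (hx : n < x.length) (hy : n < y.length),
      x.take n = y.take n ∧ x.get ⟨n, hx⟩ < y.get ⟨n, hy⟩

/-- The strict order of `θ_γ`. -/
def thetaRel (γ : Ordinal) : ThetaCarrier γ → ThetaCarrier γ → Prop :=
  fun a b => thetaLt a.1 b.1

def shiftL (α : Ordinal) : List Ordinal → List Ordinal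
  | [] => []
  | c :: t => (α + c) :: t
noncomputable def unshiftL (α : Ordinal) : List Ordinal → List Ordinal
  | [] => []
  | c :: t => (c - α) :: t
lemma cons_lt_iff (c c' : Ordinal) (a b : List Ordinal) :
    thetaLt (c::a) (c'::b) ↔ c < c' ∨ (c = c' ∧ thetaLt a b) := by
  constructor
  · rintro (⟨hpre, hne⟩ | ⟨n, hx, hy, htake, hlt⟩)
    · rw [List.cons_prefix_cons] at hpre
      obtain ⟨rfl, hpre⟩ := hpre
      exact Or.inr ⟨rfl, Or.inl ⟨hpre, fun h => hne (by rw [h])⟩⟩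
    · cases n with
      | zero => left; simpa using hlt
      | succ m =>
        simp only [List.take_succ_cons, List.cons.injEq] at htake
        refine Or.inr ⟨htake.1, Or.inr ⟨m, Nat.lt_of_succ_lt_succ hx,
          Nat.lt_of_succ_lt_succ hy, htake.2, by simpa using hlt⟩⟩
  · rintro (hlt | ⟨rfl, (⟨hpre, hne⟩ | ⟨n, hx, hy, ht, hl⟩)⟩)
    · exact Or.inr ⟨0, by simp, by simp, by simp, by simpa using hlt⟩
    · exact Or.inl ⟨List.cons_prefix_cons.mpr ⟨rfl, hpre⟩, by simp [hne]⟩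
    · exact Or.inr ⟨n+1, Nat.succ_lt_succ hx, Nat.succ_lt_succ hy,
        by simp [ht], by simpa using hl⟩
lemma nil_lt_iff (b : List Ordinal) : ¬ thetaLt [] b := by
  rintro (⟨h, hne⟩ | ⟨n, hx, _⟩)
  · exact hne (List.prefix_nil.mp h)
  · simp at hx
lemma lt_nil_iff (a : List Ordinal) : thetaLt a [] ↔ a ≠ [] := by
  constructor
  · rintro (⟨h, hne⟩ | ⟨n, _, hy, _⟩)
    · exact fun h' => hne h'.symm
    · simp at hy
  · intro h; exact Or.inl ⟨List.nil_prefix, fun h' => h h'.symm⟩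
lemma append_lt_iff (x a b : List Ordinal) : thetaLt (x++a) (x++b) ↔ thetaLt a b := by
  induction x with
  | nil => simp
  | cons c t ih => simp [cons_lt_iff, ih]
lemma shift_lt_iff (α : Ordinal) (a b : List Ordinal) :
    thetaLt (shiftL α a) (shiftL α b) ↔ thetaLt a b := by
  match a, b with
  | [], [] => simp [shiftL]
  | [], c :: t => simp [shiftL, nil_lt_iff]
  | c :: t, [] => simp [shiftL, lt_nil_iff]
  | c :: t, c' :: t' =>
    simp [shiftL, cons_lt_iff, add_lt_add_iff_left, add_left_cancel_iff]
lemma unshift_shift (α : Ordinal) (l : List Ordinal) : unshiftL α (shiftL α l) = l := by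
  cases l with
  | nil => rfl
  | cons c t => simp [shiftL, unshiftL, Ordinal.add_sub_cancel]
lemma shift_unshift (α : Ordinal) (l : List Ordinal)
    (h : ∀ c t, l = c :: t → α ≤ c) : shiftL α (unshiftL α l) = l := by
  cases l with
  | nil => rfl
  | cons c t =>
    simp [shiftL, unshiftL, Ordinal.add_sub_cancel_of_le (h c t rfl)]
lemma getElem_append_cons (x t : List Ordinal) (β : Ordinal)
    (h : x.length < (x ++ β :: t).length) :
    (x ++ β :: t).get ⟨x.length, h⟩ = β := by
  rw [List.get_eq_getElem, List.getElem_append_right (le_refl x.length)]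
  simp
lemma get_eq_of_eq_append (y x t : List Ordinal) (c : Ordinal) (hyx : y = x ++ c :: t)
    (h : x.length < y.length) : y.get ⟨x.length, h⟩ = c := by
  subst hyx; exact getElem_append_cons x t c h

/-- Lemma 2.9: if `γ` is closed under ordinal addition, `x ∈ θ_γ` has length `n` and
`α < γ`, then the set `A^α_x` of all `y ∈ θ_γ` such that `x` is an initial segment of `y`
and `y(n) ≥ α` whenever `length y > n`, with the order of `θ_γ` restricted to it,
is order isomorphic to `θ_γ`. -/
theorem theta_initialSegment_iso (γ : Ordinal)
    (hγ : ∀ δ < γ, ∀ δ' < γ, δ + δ' < γ)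
    (x : ThetaCarrier γ) (α : Ordinal) (hα : α < γ) :
    Nonempty
      (Subrel (thetaRel γ)
          {y : ThetaCarrier γ |
            x.1 <+: y.1 ∧ ∀ h : x.1.length < y.1.length, α ≤ y.1.get ⟨x.1.length, h⟩}
        ≃r thetaRel γ) := by
  classical
  set S : Set (ThetaCarrier γ) :=
    {y : ThetaCarrier γ |
      x.1 <+: y.1 ∧ ∀ h : x.1.length < y.1.length, α ≤ y.1.get ⟨x.1.length, h⟩} with hS
  -- forward map
  have hbound : ∀ z : ThetaCarrier γ, ∀ o ∈ x.1 ++ shiftL α z.1, o < γ := by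
    intro z o ho
    rcases List.mem_append.mp ho with h | h
    · exact x.2 o h
    · cases hz : z.1 with
      | nil => rw [hz] at h; simp [shiftL] at h
      | cons c t =>
        rw [hz] at h
        rcases List.mem_cons.mp h with rfl | h
        · exact hγ α hα c (z.2 c (by rw [hz]; exact List.mem_cons_self))
        · exact z.2 o (by rw [hz]; exact List.mem_cons_of_mem _ h)
  have key : ∀ (l : List Ordinal) (h : x.1.length < (x.1 ++ shiftL α l).length),
      α ≤ (x.1 ++ shiftL α l).get ⟨x.1.length, h⟩ := by
    intro l h
    cases l with
    | nil => simp [shiftL] at h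
    | cons c t =>
      rw [get_eq_of_eq_append (x.1 ++ shiftL α (c :: t)) x.1 t (α + c) rfl h]
      exact le_self_add
  have hmem : ∀ z : ThetaCarrier γ,
      (⟨x.1 ++ shiftL α z.1, hbound z⟩ : ThetaCarrier γ) ∈ S :=
    fun z => ⟨List.prefix_append _ _, key z.1⟩
  have hbound' : ∀ y : S, ∀ o ∈ unshiftL α (y.1.1.drop x.1.length), o < γ := by
    intro y o ho
    cases hd : y.1.1.drop x.1.length with
    | nil => rw [hd] at ho; simp [unshiftL] at ho
    | cons c t =>
      rw [hd] at ho
      have hct : ∀ o' ∈ c :: t, o' < γ := fun o' ho' =>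
        y.1.2 o' (List.mem_of_mem_drop (by rw [hd]; exact ho'))
      rcases List.mem_cons.mp ho with rfl | ho
      · exact lt_of_le_of_lt (Ordinal.sub_le_self c α) (hct c List.mem_cons_self)
      · exact hct o (List.mem_cons_of_mem _ ho)
  refine ⟨RelIso.symm ⟨⟨fun z => ⟨⟨x.1 ++ shiftL α z.1, hbound z⟩, hmem z⟩,
    fun y => ⟨unshiftL α (y.1.1.drop x.1.length), hbound' y⟩, ?_, ?_⟩, ?_⟩⟩
  · intro z
    apply Subtype.ext
    show unshiftL α ((x.1 ++ shiftL α z.1).drop x.1.length) = z.1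
    rw [List.drop_left, unshift_shift]
  · intro y
    apply Subtype.ext
    apply Subtype.ext
    show x.1 ++ shiftL α (unshiftL α (y.1.1.drop x.1.length)) = y.1.1
    obtain ⟨s, hs⟩ := y.2.1
    have hdrop : y.1.1.drop x.1.length = s := by rw [← hs, List.drop_left]
    rw [hdrop, shift_unshift, hs]
    intro c t hct
    have hlen : x.1.length < y.1.1.length := by
      rw [← hs, hct]; simp
    have := y.2.2 hlen
    have hy : y.1.1.get ⟨x.1.length, hlen⟩ = c :=
      get_eq_of_eq_append _ _ _ _ (by rw [← hs, hct]) hlen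
    rwa [hy] at this
  · intro z z'
    show thetaLt (x.1 ++ shiftL α z.1) (x.1 ++ shiftL α z'.1) ↔ thetaLt z.1 z'.1
    rw [append_lt_iff, shift_lt_iff]
end

section
/- Let γ be an ordinal closed under ordinal addition which is not a cardinal, and let α < β < |γ|⁺ be ordinals, where |γ|⁺ is the successor cardinal of the cardinality of γ. Then θ_γ is order isomorphic to θ_γ × (α, β]. -/
/-- The product `ρ × θ` of linear orders, ordered by last differences:
`(x, y) < (x', y')` iff `y < y'`, or `y = y'` and `x < x'`. -/
def lastDiffRel {A B : Type*} (r : A → A → Prop) (s : B → B → Prop) :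
    A × B → A × B → Prop :=
  fun p q => s p.2 q.2 ∨ (p.2 = q.2 ∧ r p.1 q.1)

/-- The interval `(α, β]`: the set `{δ : α < δ ≤ β}`, together with `α` itself
in case `α` is `0` or a limit ordinal. -/
def ocInterval (α β : Ordinal) : Set Ordinal :=
  {δ | (α < δ ∧ δ ≤ β) ∨ (δ = α ∧ (α = 0 ∨ Order.IsSuccLimit α))}


open Ordinal Set

namespace ThetaZ
universe u


variable {A : Type*} {B : Type*} {C : Type*} {D : Type*}

instance subrelSetWO {X : Type*} (r : X → X → Prop) [IsWellOrder X r] (s : Set X) :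
    IsWellOrder (Subtype s) (Subrel r s) :=
  inferInstanceAs (IsWellOrder _ (Subrel r (· ∈ s)))

instance subrelSetWO' {X : Type*} (r : X → X → Prop) [IsWellOrder X r] (s : Set X) :
    IsWellOrder (↥s) (Subrel r s) :=
  inferInstanceAs (IsWellOrder _ (Subrel r (· ∈ s)))

abbrev LD {A B : Type*} (r : A → A → Prop) (s : B → B → Prop) := lastDiffRel r s

def lastDiffCongr {r : A → A → Prop} {r' : B → B → Prop} {s : C → C → Prop} {s' : D → D → Prop}
    (e : r ≃r r') (f : s ≃r s') : LD r s ≃r LD r' s' where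
  toEquiv := Equiv.prodCongr e.toEquiv f.toEquiv
  map_rel_iff' := by
    rintro ⟨a, b⟩ ⟨a', b'⟩
    show (s' (f b) (f b') ∨ (f b = f b' ∧ r' (e a) (e a'))) ↔ _
    rw [f.map_rel_iff, e.map_rel_iff, EquivLike.apply_eq_iff_eq]
    rfl

def lastDiffSumDistrib (r : A → A → Prop) (s : B → B → Prop) (t : C → C → Prop) :
    LD r (Sum.Lex s t) ≃r Sum.Lex (LD r s) (LD r t) where
  toFun p := match p with
    | (a, Sum.inl b) => Sum.inl (a, b)
    | (a, Sum.inr c) => Sum.inr (a, c)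
  invFun q := match q with
    | Sum.inl (a, b) => (a, Sum.inl b)
    | Sum.inr (a, c) => (a, Sum.inr c)
  left_inv := by rintro ⟨a, b | c⟩ <;> rfl
  right_inv := by rintro (⟨a, b⟩ | ⟨a, c⟩) <;> rfl
  map_rel_iff' := by
    rintro ⟨a, b | b⟩ ⟨a', b' | b'⟩ <;>
      simp [lastDiffRel, Sum.lex_inl_inl, Sum.lex_inr_inr, Sum.lex_inr_inl, Sum.Lex.sep]

def sumLexAssocIso (r : A → A → Prop) (s : B → B → Prop) (t : C → C → Prop) :
    Sum.Lex (Sum.Lex r s) t ≃r Sum.Lex r (Sum.Lex s t) where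
  toEquiv := Equiv.sumAssoc A B C
  map_rel_iff' := by
    rintro ((a | b) | c) ((a' | b') | c') <;>
      simp [Equiv.sumAssoc, Sum.lex_inl_inl, Sum.lex_inr_inr, Sum.lex_inr_inl, Sum.Lex.sep]

/-- index with one point: LD r (one-point order) ≅ r -/
def lastDiffSingleton {X : Type*} (r : A → A → Prop) (s : X → X → Prop)
    (hX : Subsingleton X) (hs : ∀ x y, ¬ s x y) (x₀ : X) : LD r s ≃r r where
  toFun p := p.1
  invFun a := (a, x₀)
  left_inv := by rintro ⟨a, x⟩; simp [hX.elim x₀ x]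
  right_inv := fun a => rfl
  map_rel_iff' := by
    rintro ⟨a, x⟩ ⟨a', x'⟩
    show r a a' ↔ s x x' ∨ (x = x' ∧ r a a')
    constructor
    · intro h; exact Or.inr ⟨hX.elim x x', h⟩
    · rintro (h | ⟨_, h⟩)
      · exact absurd h (hs _ _)
      · exact h



/-- the canonical order on `Iio o` as a relation on the subtype -/
abbrev IioLT (o : Ordinal) : ↥(Set.Iio o) → ↥(Set.Iio o) → Prop := fun a b => a.1 < b.1

instance (o : Ordinal) : IsWellOrder _ (IioLT o) :=
  inferInstanceAs (IsWellOrder _ (Subrel (· < ·) (Set.Iio o)))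

noncomputable def enumIso {α : Type*} (r : α → α → Prop) [IsWellOrder α r] :
    r ≃r IioLT (Ordinal.type r) := by
  refine RelIso.mk (Equiv.ofBijective
    (fun a => (⟨Ordinal.typein r a, Ordinal.typein_lt_type r a⟩ : Set.Iio (Ordinal.type r)))
    ⟨fun a b h => Ordinal.typein_injective r (congrArg Subtype.val h), ?_⟩) ?_
  · rintro ⟨o, ho⟩
    obtain ⟨a, rfl⟩ := Ordinal.typein_surj r ho
    exact ⟨a, rfl⟩
  · intro a b
    simpa [Equiv.ofBijective] using (Ordinal.typein_lt_typein r (a := a) (b := b))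

theorem type_eq_typein_max {α : Type*} (r : α → α → Prop) [IsWellOrder α r]
    (m : α) (hm : ∀ a, a = m ∨ r a m) : Ordinal.type r = Ordinal.typein r m + 1 := by
  refine le_antisymm ?_ ?_
  · by_contra h
    push_neg at h
    obtain ⟨a, ha⟩ := Ordinal.typein_surj r h
    have hma : r m a := by
      rw [← Ordinal.typein_lt_typein r, ha]
      exact lt_of_lt_of_le (lt_add_one _) le_rfl
    rcases hm a with rfl | h'
    · exact absurd hma (irrefl _)
    · exact absurd hma (asymm h')
  · rw [Ordinal.add_one_eq_succ, Order.succ_le_iff]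
    exact Ordinal.typein_lt_type r m

noncomputable def iioSumIso (a b : Ordinal) :
    Sum.Lex (IioLT a) (IioLT b) ≃r IioLT (a + b) where
  toFun p := match p with
    | Sum.inl i => ⟨i.1, lt_of_lt_of_le i.2 (le_self_add : a ≤ a + b)⟩
    | Sum.inr j => ⟨a + j.1, (add_lt_add_iff_left a).2 j.2⟩
  invFun i := if h : i.1 < a then Sum.inl ⟨i.1, h⟩ else
    Sum.inr ⟨i.1 - a, (Ordinal.sub_lt_of_le (le_of_not_gt h)).2 i.2⟩
  left_inv := by
    rintro (i | j)
    · simp [show i.1 < a from i.2]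
    · have h1 : ¬ (a + j.1 < a) := not_lt.2 (le_self_add)
      simp only [h1, dif_neg, not_false_iff]
      congr 1
      ext
      simp [Ordinal.add_sub_cancel]
  right_inv := by
    rintro ⟨i, hi⟩
    by_cases h : i < a
    · simp [h]
    · simp only [h, dif_neg, not_false_iff]
      ext
      simp [Ordinal.add_sub_cancel_of_le (le_of_not_gt h)]
  map_rel_iff' := by
    rintro (i | j) (i' | j')
    · show i.1 < i'.1 ↔ _
      simp [Sum.lex_inl_inl]
    · show i.1 < a + j'.1 ↔ _
      simp only [Sum.Lex.sep, iff_true]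
      exact lt_of_lt_of_le i.2 (le_self_add)
    · show a + j.1 < i'.1 ↔ _
      constructor
      · intro h; exact absurd (lt_of_le_of_lt (le_self_add) h) (not_lt.2 i'.2.le)
      · intro h; exact absurd h (Sum.lex_inr_inl)
    · show a + j.1 < a + j'.1 ↔ _
      simp [Sum.lex_inr_inr]


/-- lower a lifted `Iio` -/
noncomputable def liftIio (w : Ordinal.{u}) :
    IioLT (Ordinal.lift.{u+1} w) ≃r IioLT w where
  toFun b := ⟨(Ordinal.lt_lift_iff.mp b.2).choose,
    (Ordinal.lt_lift_iff.mp b.2).choose_spec.1⟩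
  invFun a := ⟨Ordinal.lift.{u+1} a.1, Ordinal.lift_lt.mpr a.2⟩
  left_inv := by
    rintro ⟨b, hb⟩
    exact Subtype.ext (Ordinal.lt_lift_iff.mp hb).choose_spec.2
  right_inv := by
    rintro ⟨a, ha⟩
    refine Subtype.ext (Ordinal.lift_inj.mp ?_)
    exact (Ordinal.lt_lift_iff.mp (Ordinal.lift_lt.mpr ha)).choose_spec.2
  map_rel_iff' := by
    rintro ⟨b, hb⟩ ⟨b', hb'⟩
    show (Ordinal.lt_lift_iff.mp hb).choose < (Ordinal.lt_lift_iff.mp hb').choose ↔ b < b'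
    rw [← Ordinal.lift_lt.{u+1}, (Ordinal.lt_lift_iff.mp hb).choose_spec.2,
      (Ordinal.lt_lift_iff.mp hb').choose_spec.2]



theorem thetaLt_nil {x : List Ordinal} (h : x ≠ []) : thetaLt x [] :=
  Or.inl ⟨List.nil_prefix, fun e => h e.symm⟩

theorem not_thetaLt_nil (y : List Ordinal) : ¬ thetaLt [] y := by
  rintro (⟨hp, hne⟩ | ⟨n, hx, hy, ht, hlt⟩)
  · exact hne (List.prefix_nil.mp hp)
  · exact absurd hx (by simp)

theorem thetaLt_cons_cons {a b : Ordinal} {x y : List Ordinal} :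
    thetaLt (a :: x) (b :: y) ↔ a < b ∨ (a = b ∧ thetaLt x y) := by
  constructor
  · rintro (⟨hp, hne⟩ | ⟨n, hx, hy, ht, hlt⟩)
    · rw [List.cons_prefix_cons] at hp
      obtain ⟨rfl, hp⟩ := hp
      refine Or.inr ⟨rfl, Or.inl ⟨hp, fun e => hne (by rw [e])⟩⟩
    · cases n with
      | zero => exact Or.inl hlt
      | succ m =>
        rw [List.take_succ_cons, List.take_succ_cons] at ht
        injection ht with h1 h2
        subst h1
        refine Or.inr ⟨rfl, Or.inr ⟨m, Nat.lt_of_succ_lt_succ hx,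
          Nat.lt_of_succ_lt_succ hy, h2, hlt⟩⟩
  · rintro (h | ⟨rfl, (⟨hp, hne⟩ | ⟨n, hx, hy, ht, hlt⟩)⟩)
    · exact Or.inr ⟨0, Nat.succ_pos _, Nat.succ_pos _, rfl, h⟩
    · exact Or.inl ⟨List.cons_prefix_cons.mpr ⟨rfl, hp⟩, fun e => hne (by
        injection e with _ e')⟩
    · exact Or.inr ⟨n + 1, Nat.succ_lt_succ hx, Nat.succ_lt_succ hy, by
        rw [List.take_succ_cons, List.take_succ_cons, ht], hlt⟩

theorem thetaLt_trichot (x y : List Ordinal) : thetaLt x y ∨ x = y ∨ thetaLt y x := by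
  induction x generalizing y with
  | nil =>
    cases y with
    | nil => exact Or.inr (Or.inl rfl)
    | cons b m => exact Or.inr (Or.inr (thetaLt_nil (by simp)))
  | cons a l ih =>
    cases y with
    | nil => exact Or.inl (thetaLt_nil (by simp))
    | cons b m =>
      rcases lt_trichotomy a b with h | rfl | h
      · exact Or.inl (thetaLt_cons_cons.mpr (Or.inl h))
      · rcases ih m with h | rfl | h
        · exact Or.inl (thetaLt_cons_cons.mpr (Or.inr ⟨rfl, h⟩))
        · exact Or.inr (Or.inl rfl)
        · exact Or.inr (Or.inr (thetaLt_cons_cons.mpr (Or.inr ⟨rfl, h⟩)))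
      · exact Or.inr (Or.inr (thetaLt_cons_cons.mpr (Or.inl h)))

theorem thetaLt_asymm {x y : List Ordinal} (h : thetaLt x y) : ¬ thetaLt y x := by
  induction x generalizing y with
  | nil => exact absurd h (not_thetaLt_nil y)
  | cons a l ih =>
    cases y with
    | nil => exact not_thetaLt_nil _
    | cons b m =>
      rcases thetaLt_cons_cons.mp h with h' | ⟨rfl, h'⟩
      · intro hyx
        rcases thetaLt_cons_cons.mp hyx with h'' | ⟨e, _⟩
        · exact absurd h'' (lt_asymm h')
        · exact absurd h' (by rw [e]; exact lt_irrefl _)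
      · intro hyx
        rcases thetaLt_cons_cons.mp hyx with h'' | ⟨_, h''⟩
        · exact lt_irrefl _ h''
        · exact (ih h') h''


abbrev Pw (γ w : Ordinal) := lastDiffRel (thetaRel γ) (IioLT w)



variable {γ : Ordinal}

noncomputable def consIso (γ : Ordinal.{u}) :
    thetaRel γ ≃r Sum.Lex (Pw γ γ) (IioLT (1 : Ordinal.{u})) where
  toFun x := match x with
    | ⟨[], _⟩ => Sum.inr ⟨0, Set.mem_Iio.mpr zero_lt_one⟩
    | ⟨a :: l, h⟩ => Sum.inl (⟨l, fun o ho => h o (List.mem_cons_of_mem a ho)⟩,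
        ⟨a, h a List.mem_cons_self⟩)
  invFun p := match p with
    | Sum.inr _ => ⟨[], by simp⟩
    | Sum.inl (t, d) => ⟨d.1 :: t.1, by
        intro o ho
        rcases List.mem_cons.1 ho with rfl | ho
        · exact d.2
        · exact t.2 o ho⟩
  left_inv := by rintro ⟨(_ | ⟨a, l⟩), h⟩ <;> rfl
  right_inv := by
    rintro (⟨⟨t, ht⟩, ⟨d, hd⟩⟩ | ⟨u, hu⟩)
    · rfl
    · have hu0 : u = 0 := Ordinal.lt_one_iff_zero.mp hu
      subst hu0; rfl
  map_rel_iff' := by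
    rintro ⟨(_ | ⟨a, l⟩), h⟩ ⟨(_ | ⟨b, m⟩), h'⟩
    · show Sum.Lex _ _ (Sum.inr _) (Sum.inr _) ↔ _
      constructor
      · intro hh
        rw [Sum.lex_inr_inr] at hh
        exact absurd hh (lt_irrefl _)
      · intro hh; exact absurd hh (not_thetaLt_nil _)
    · show Sum.Lex _ _ (Sum.inr _) (Sum.inl _) ↔ _
      constructor
      · intro hh; exact absurd hh (Sum.lex_inr_inl)
      · intro hh; exact absurd hh (not_thetaLt_nil _)
    · show Sum.Lex _ _ (Sum.inl _) (Sum.inr _) ↔ _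
      constructor
      · intro _; exact thetaLt_nil (by simp)
      · intro _; exact Sum.Lex.sep _ _
    · show Sum.Lex _ _ (Sum.inl _) (Sum.inl _) ↔ _
      rw [Sum.lex_inl_inl]
      show (a < b ∨ _) ↔ thetaLt (a :: l) (b :: m)
      rw [thetaLt_cons_cons]
      constructor
      · rintro (hh | ⟨he, hh⟩)
        · exact Or.inl hh
        · exact Or.inr ⟨congrArg Subtype.val he, hh⟩
      · rintro (hh | ⟨he, hh⟩)
        · exact Or.inl hh
        · exact Or.inr ⟨Subtype.ext he, hh⟩


section Part5

open Cardinal in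
theorem dummy_open_check : True := trivial

instance ldTrichot {A B : Type*} (r : A → A → Prop) (s : B → B → Prop)
    [IsTrichotomous A r] [IsTrichotomous B s] :
    IsTrichotomous (A × B) (lastDiffRel r s) := by
  suffices H : ∀ p q, lastDiffRel r s p q ∨ p = q ∨ lastDiffRel r s q p from
    ⟨fun p q h1 h2 => (H p q).elim (absurd · h1) (·.elim id (absurd · h2))⟩
  rintro ⟨a, b⟩ ⟨a', b'⟩
  rcases trichotomous_of s b b' with h | rfl | h
  · exact Or.inl (Or.inl h)
  · rcases trichotomous_of r a a' with h | rfl | h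
    · exact Or.inl (Or.inr ⟨rfl, h⟩)
    · exact Or.inr (Or.inl rfl)
    · exact Or.inr (Or.inr (Or.inr ⟨rfl, h⟩))
  · exact Or.inr (Or.inr (Or.inl h))

instance ldAsymm {A B : Type*} (r : A → A → Prop) (s : B → B → Prop)
    [IsAsymm A r] [IsAsymm B s] :
    IsAsymm (A × B) (lastDiffRel r s) := by
  constructor
  rintro ⟨a, b⟩ ⟨a', b'⟩ (h | ⟨rfl, h⟩) (h' | ⟨he', hr'⟩)
  · exact asymm h h'
  · rw [he'] at h; exact asymm h h
  · exact asymm h' h'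
  · exact asymm h hr'

instance thetaTrichot (γ : Ordinal) : IsTrichotomous (ThetaCarrier γ) (thetaRel γ) := by
  suffices H : ∀ x y, thetaRel γ x y ∨ x = y ∨ thetaRel γ y x from
    ⟨fun p q h1 h2 => (H p q).elim (absurd · h1) (·.elim id (absurd · h2))⟩
  intro x y
  rcases thetaLt_trichot x.1 y.1 with h | h | h
  · exact Or.inl h
  · exact Or.inr (Or.inl (Subtype.ext h))
  · exact Or.inr (Or.inr h)

instance thetaAsymm (γ : Ordinal) : IsAsymm (ThetaCarrier γ) (thetaRel γ) :=
  ⟨fun _ _ h => thetaLt_asymm h⟩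

theorem type_IioLT (o : Ordinal.{u}) :
    Ordinal.type (IioLT o) = Ordinal.lift.{u+1} o := by
  rw [← Ordinal.typein_ordinal]
  rfl

noncomputable def pwSplit (γ a b : Ordinal.{u}) :
    Pw γ (a + b) ≃r Sum.Lex (Pw γ a) (Pw γ b) :=
  (lastDiffCongr (RelIso.refl _) (iioSumIso a b).symm).trans (lastDiffSumDistrib _ _ _)

noncomputable def pwOne (γ : Ordinal.{u}) : Pw γ 1 ≃r thetaRel γ :=
  lastDiffSingleton (thetaRel γ) (IioLT 1)
    ⟨fun a b => Subtype.ext (by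
      rw [Ordinal.lt_one_iff_zero.mp a.2, Ordinal.lt_one_iff_zero.mp b.2])⟩
    (fun x y h => by
      have h' : (x : Ordinal) < (y : Ordinal) := h
      rw [Ordinal.lt_one_iff_zero.mp x.2, Ordinal.lt_one_iff_zero.mp y.2] at h'
      exact lt_irrefl _ h')
    ⟨0, Set.mem_Iio.mpr zero_lt_one⟩

variable {γ : Ordinal.{u}}

theorem pwAbsorb (hγ : ∀ δ < γ, ∀ δ' < γ, δ + δ' < γ) (hlim : Order.IsSuccLimit γ)
    {w : Ordinal.{u}} (hw : w < γ) :
    Nonempty (thetaRel γ ≃r Sum.Lex (Pw γ w) (thetaRel γ)) := by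
  have hadd : w + γ = γ :=
    le_antisymm ((Ordinal.add_le_iff_of_isSuccLimit hlim).2 fun b hb => (hγ w hw b hb).le)
      (le_add_self)
  have e2 : Pw γ (w + γ) ≃r Sum.Lex (Pw γ w) (Pw γ γ) := pwSplit γ w γ
  rw [hadd] at e2
  exact ⟨(consIso γ).trans ((RelIso.sumLexCongr e2 (RelIso.refl _)).trans
    ((sumLexAssocIso _ _ _).trans
      (RelIso.sumLexCongr (RelIso.refl _) (consIso γ).symm)))⟩

theorem smallCase (hγ : ∀ δ < γ, ∀ δ' < γ, δ + δ' < γ) (hlim : Order.IsSuccLimit γ)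
    {w : Ordinal.{u}} (hw : w < γ) :
    Nonempty (thetaRel γ ≃r Pw γ (w + 1)) := by
  obtain ⟨e⟩ := pwAbsorb hγ hlim hw
  exact ⟨e.trans ((RelIso.sumLexCongr (RelIso.refl _) (pwOne γ).symm).trans
    (pwSplit γ w 1).symm)⟩

theorem limitStep (hγ : ∀ δ < γ, ∀ δ' < γ, δ + δ' < γ) (hlim : Order.IsSuccLimit γ)
    (hκγ : γ.card.ord < γ)
    {ζ : Ordinal.{u}} (hζlim : Order.IsSuccLimit ζ) (hcard : ζ.card ≤ γ.card)
    (IH : ∀ e < ζ, Nonempty (thetaRel γ ≃r Pw γ (e + 1))) :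
    Nonempty (thetaRel γ ≃r Pw γ (ζ + 1)) := by
  classical
  set κo := γ.card.ord with hκo
  have hmkle : Cardinal.mk ↥(Set.Iio ζ) ≤ Cardinal.mk ↥(Set.Iio κo) := by
    rw [Ordinal.mk_Iio_ordinal, Ordinal.mk_Iio_ordinal, Cardinal.lift_le, Cardinal.card_ord]
    exact hcard
  haveI : Nonempty ↥(Set.Iio ζ) := ⟨⟨0, hζlim.pos⟩⟩
  obtain ⟨ι⟩ := (Cardinal.le_def _ _).mp hmkle
  set F : ↥(Set.Iio κo) → ↥(Set.Iio ζ) := Function.invFun ι with hFdef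
  have hFsurj : Function.Surjective F := Function.invFun_surjective ι.injective
  set Sc : ↥(Set.Iio ζ) → Set Ordinal :=
    fun i => {o : Ordinal | ∃ ho : o < κo, i.1 ≤ (F ⟨o, ho⟩).1} with hScdef
  have hScne : ∀ i, (Sc i).Nonempty := by
    intro i
    obtain ⟨η, hη⟩ := hFsurj i
    exact ⟨η.1, η.2, by rw [show (⟨η.1, η.2⟩ : ↥(Set.Iio κo)) = η from rfl, hη]⟩
  have hScmem : ∀ i, sInf (Sc i) ∈ Sc i := fun i => csInf_mem (hScne i)
  set c : ↥(Set.Iio ζ) → ↥(Set.Iio κo) :=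
    fun i => ⟨sInf (Sc i), (hScmem i).choose⟩ with hcdef
  have hcle : ∀ i, i.1 ≤ (F (c i)).1 := fun i => (hScmem i).choose_spec
  have hcmin : ∀ (i : ↥(Set.Iio ζ)) (η : ↥(Set.Iio κo)), i.1 ≤ (F η).1 → (c i).1 ≤ η.1 :=
    fun i η h => csInf_le (OrderBot.bddBelow _) ⟨η.2, h⟩
  have hcmono : ∀ i j : ↥(Set.Iio ζ), i.1 ≤ j.1 → (c i).1 ≤ (c j).1 :=
    fun i j hij => csInf_le_csInf (OrderBot.bddBelow _) (hScne j)
      (fun o ho => ⟨ho.choose, le_trans hij ho.choose_spec⟩)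
  set T : Set ↥(Set.Iio κo) := Set.range c with hTdef
  have hcF : ∀ η : ↥T, c (F η.1) = η.1 := by
    rintro ⟨η, i, rfl⟩
    exact Subtype.ext (le_antisymm (hcmin (F (c i)) (c i) le_rfl)
      (hcmin i (c (F (c i))) (le_trans (hcle i) (hcle (F (c i))))))
  set Fib : ↥(Set.Iio κo) → Set Ordinal :=
    (fun η => {o : Ordinal | ∃ ho : o < ζ, c ⟨o, ho⟩ = η}) with hFibdef
  have hfible : ∀ (η : ↥(Set.Iio κo)) (o : Ordinal), o ∈ Fib η → o ≤ (F η).1 := by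
    rintro η o ⟨ho, rfl⟩
    exact hcle ⟨o, ho⟩
  have hfibm : ∀ η : ↥T, (F η.1).1 ∈ Fib η.1 := fun η => ⟨(F η.1).2, hcF η⟩
  have hψ : ∀ η : ↥T,
      Nonempty (lastDiffRel (thetaRel γ)
        (Subrel ((· < ·) : Ordinal → Ordinal → Prop) (Fib η.1)) ≃r thetaRel γ) := by
    intro η
    set m : ↥(Fib η.1) := ⟨(F η.1).1, hfibm η⟩ with hmdef
    have hmx : ∀ a : ↥(Fib η.1),
        a = m ∨ Subrel ((· < ·) : Ordinal → Ordinal → Prop) (Fib η.1) a m := by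
      intro a
      rcases lt_or_eq_of_le (hfible η.1 a.1 a.2) with h | h
      · exact Or.inr h
      · exact Or.inl (Subtype.ext h)
    have hτ : Ordinal.type (Subrel ((· < ·) : Ordinal → Ordinal → Prop) (Fib η.1)) =
        Ordinal.typein (Subrel ((· < ·) : Ordinal → Ordinal → Prop) (Fib η.1)) m + 1 :=
      type_eq_typein_max _ m hmx
    have htle : Ordinal.type (Subrel ((· < ·) : Ordinal → Ordinal → Prop) (Fib η.1)) ≤
        Ordinal.lift.{u+1} ζ := by
      have emb : Subrel ((· < ·) : Ordinal → Ordinal → Prop) (Fib η.1) ↪r IioLT ζ :=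
        RelEmbedding.ofMonotone (fun a => ⟨a.1, a.2.choose⟩) (fun a b h => h)
      calc Ordinal.type _ ≤ Ordinal.type (IioLT ζ) := emb.ordinal_type_le
        _ = Ordinal.lift.{u+1} ζ := type_IioLT ζ
    have hεlt : Ordinal.typein (Subrel ((· < ·) : Ordinal → Ordinal → Prop) (Fib η.1)) m <
        Ordinal.lift.{u+1} ζ :=
      lt_of_lt_of_le (lt_add_one _) (hτ ▸ htle)
    obtain ⟨e, heζ, helift⟩ := Ordinal.lt_lift_iff.mp hεlt
    obtain ⟨eIH⟩ := IH e heζ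
    have eEnum := enumIso (Subrel ((· < ·) : Ordinal → Ordinal → Prop) (Fib η.1))
    have hlift1 : Ordinal.lift.{u+1} e + 1 = Ordinal.lift.{u+1} (e + 1) := by
      rw [Ordinal.lift_add, Ordinal.lift_one]
    rw [hτ, ← helift, hlift1] at eEnum
    exact ⟨(lastDiffCongr (RelIso.refl (thetaRel γ))
      (eEnum.trans (liftIio (e + 1)))).trans eIH.symm⟩
  set ψ : (η : ↥T) → (lastDiffRel (thetaRel γ)
      (Subrel ((· < ·) : Ordinal → Ordinal → Prop) (Fib η.1)) ≃r thetaRel γ) :=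
    fun η => Classical.choice (hψ η) with hψdef
  have psiRel : ∀ (η η' : ↥T) (_ : η = η') (x x' : ThetaCarrier γ)
      (j : ↥(Fib η.1)) (j' : ↥(Fib η'.1)),
      (j.1 < j'.1 ∨ (j.1 = j'.1 ∧ thetaRel γ x x')) →
      thetaRel γ (ψ η (x, j)) (ψ η' (x', j')) := by
    rintro η η' rfl x x' j j' h
    refine (ψ η).map_rel_iff.mpr ?_
    rcases h with h | ⟨h1, h2⟩
    · exact Or.inl h
    · exact Or.inr ⟨Subtype.ext h1, h2⟩
  set Φf : (ThetaCarrier γ × ↥(Set.Iio ζ)) → (ThetaCarrier γ × ↥T) :=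
    fun p => (ψ ⟨c p.2, Set.mem_range_self p.2⟩ (p.1, ⟨p.2.1, p.2.2, rfl⟩),
      ⟨c p.2, Set.mem_range_self p.2⟩) with hΦfdef
  have hmono : ∀ p q, Pw γ ζ p q →
      lastDiffRel (thetaRel γ) (Subrel (IioLT κo) T) (Φf p) (Φf q) := by
    rintro ⟨x, i⟩ ⟨x', i'⟩ (h | ⟨he, hx⟩)
    · rcases lt_or_eq_of_le (hcmono i i' (le_of_lt h)) with hcc | hcc
      · exact Or.inl hcc
      · exact Or.inr ⟨Subtype.ext (Subtype.ext hcc),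
          psiRel _ _ (Subtype.ext (Subtype.ext hcc)) x x' _ _ (Or.inl h)⟩
    · obtain rfl : i = i' := he
      exact Or.inr ⟨rfl, psiRel _ _ rfl x x' _ _ (Or.inr ⟨rfl, hx⟩)⟩
  have psiCongr : ∀ (A B : ↥T) (_ : A = B) (x : ThetaCarrier γ)
      (j : ↥(Fib A.1)) (j' : ↥(Fib B.1)), j.1 = j'.1 →
      ψ A (x, j) = ψ B (x, j') := by
    rintro A B rfl x j j' h
    rw [Subtype.ext h]
  have hsurj : Function.Surjective Φf := by
    rintro ⟨y, η⟩
    obtain ⟨hoζ, hcη⟩ := ((ψ η).symm y).2.2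
    refine ⟨(((ψ η).symm y).1, ⟨((ψ η).symm y).2.1, hoζ⟩), ?_⟩
    have hceq : (⟨c ⟨((ψ η).symm y).2.1, hoζ⟩,
        Set.mem_range_self _⟩ : ↥T) = η := Subtype.ext hcη
    refine Prod.ext_iff.mpr ⟨?_, hceq⟩
    show ψ _ (((ψ η).symm y).1, ⟨((ψ η).symm y).2.1, _, rfl⟩) = y
    rw [psiCongr _ η hceq _ _ ((ψ η).symm y).2 rfl]
    exact (ψ η).apply_symm_apply y
  have Φiso : Pw γ ζ ≃r lastDiffRel (thetaRel γ) (Subrel (IioLT κo) T) :=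
    RelIso.ofSurjective (RelEmbedding.ofMonotone Φf hmono) hsurj
  have hwle : Ordinal.type (Subrel (IioLT κo) T) ≤ Ordinal.lift.{u+1} κo := by
    calc Ordinal.type (Subrel (IioLT κo) T) ≤ Ordinal.type (IioLT κo) :=
          (Subrel.relEmbedding _ _).ordinal_type_le
      _ = Ordinal.lift.{u+1} κo := type_IioLT κo
  obtain ⟨w', hw'lift⟩ := Ordinal.mem_range_lift_of_le hwle
  have hw'γ : w' < γ := lt_of_le_of_lt
    (Ordinal.lift_le.mp (le_trans (le_of_eq hw'lift) hwle)) hκγ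
  have eT := enumIso (Subrel (IioLT κo) T)
  rw [← hw'lift] at eT
  obtain ⟨efin⟩ := pwAbsorb hγ hlim hw'γ
  have E2 : Pw γ ζ ≃r Pw γ w' :=
    Φiso.trans (lastDiffCongr (RelIso.refl _) (eT.trans (liftIio w')))
  exact ⟨efin.trans ((RelIso.sumLexCongr E2.symm (pwOne γ).symm).trans
    (pwSplit γ ζ 1).symm)⟩

/-- The main induction. -/
theorem mainTheta (hγ : ∀ δ < γ, ∀ δ' < γ, δ + δ' < γ) (hlim : Order.IsSuccLimit γ)
    (hκγ : γ.card.ord < γ) :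
    ∀ ζ : Ordinal.{u}, ζ < (Order.succ γ.card).ord →
      Nonempty (thetaRel γ ≃r Pw γ (ζ + 1)) := by
  intro ζ
  induction ζ using Ordinal.induction with
  | h ζ IH =>
    intro hζB
    by_cases hsmall : ζ < γ
    · exact smallCase hγ hlim hsmall
    push_neg at hsmall
    rcases Ordinal.zero_or_succ_or_isSuccLimit ζ with rfl | ⟨e, rfl⟩ | hl
    · exact absurd hsmall (not_le.mpr hlim.pos)
    · rw [← Ordinal.add_one_eq_succ]
      obtain ⟨e1⟩ := IH e (Order.lt_succ e) (lt_trans (Order.lt_succ e) hζB)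
      obtain ⟨eab⟩ := pwAbsorb hγ hlim (by simpa using hlim.succ_lt hlim.pos)
      have A3 : thetaRel γ ≃r Sum.Lex (thetaRel γ) (thetaRel γ) :=
        eab.trans (RelIso.sumLexCongr (pwOne γ) (RelIso.refl _))
      have A1 : Pw γ ((e + 1) + 1) ≃r Sum.Lex (Pw γ (e + 1)) (Pw γ 1) := pwSplit γ (e + 1) 1
      have A2 : Sum.Lex (Pw γ (e + 1)) (Pw γ 1) ≃r Sum.Lex (thetaRel γ) (thetaRel γ) :=
        RelIso.sumLexCongr e1.symm (pwOne γ)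
      exact ⟨A3.trans (A2.symm.trans A1.symm)⟩
    · have hcard : ζ.card ≤ γ.card :=
        Order.lt_succ_iff.mp (Cardinal.lt_ord.mp hζB)
      exact limitStep hγ hlim hκγ hl hcard (fun e he => IH e he (lt_trans he hζB))

end Part5

end ThetaZ

/-- Lemma 2.10(ii): if `γ` is closed under ordinal addition and is not a cardinal,
and `α < β < |γ|⁺`, then `θ_γ` is order isomorphic to `θ_γ × (α, β]`. -/
theorem theta_iso_theta_mul_interval (γ : Ordinal)
    (hγ : ∀ δ < γ, ∀ δ' < γ, δ + δ' < γ)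
    (hγcard : γ.card.ord ≠ γ)
    (α β : Ordinal) (hαβ : α < β) (hβ : β < (Order.succ γ.card).ord) :
    Nonempty
      (thetaRel γ ≃r
        lastDiffRel (thetaRel γ)
          (fun a b : ocInterval α β => a.1 < b.1)) := by
  classical
  have h1γ : 1 < γ := by
    rcases lt_or_ge 1 γ with h | h
    · exact h
    · exfalso
      rcases Ordinal.le_one_iff.mp h with rfl | rfl
      · exact hγcard (by rw [Ordinal.card_zero, Cardinal.ord_zero])
      · exact hγcard (by rw [Ordinal.card_one, Cardinal.ord_one])
  have hlim : Order.IsSuccLimit γ := by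
    refine Ordinal.isSuccLimit_iff.mpr ⟨fun h0 => (by simp : ¬ (1 : Ordinal) < 0) (h0 ▸ h1γ),
      Order.isSuccPrelimit_of_succ_lt fun a ha => ?_⟩
    rw [← Ordinal.add_one_eq_succ]
    exact hγ a ha 1 h1γ
  have hκγ : γ.card.ord < γ := lt_of_le_of_ne (Cardinal.ord_card_le γ) hγcard
  haveI : IsWellOrder ↥(ocInterval α β) (fun a b : ocInterval α β => a.1 < b.1) :=
    inferInstanceAs (IsWellOrder _ (Subrel (· < ·) (ocInterval α β)))
  set S := ocInterval α β with hS
  set srel := (fun a b : ocInterval α β => a.1 < b.1) with hsrel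
  have hβS : β ∈ S := Or.inl ⟨hαβ, le_rfl⟩
  set m : ↥S := ⟨β, hβS⟩ with hm
  have hmax : ∀ a : ↥S, a = m ∨ srel a m := by
    intro a
    rcases a.2 with ⟨h1, h2⟩ | ⟨he, _⟩
    · rcases lt_or_eq_of_le h2 with h | h
      · exact Or.inr h
      · exact Or.inl (Subtype.ext h)
    · exact Or.inr (show a.1 < β by rw [he]; exact hαβ)
  have hts : Ordinal.type srel = Ordinal.typein srel m + 1 :=
    ThetaZ.type_eq_typein_max srel m hmax
  have htle : Ordinal.type srel ≤ Ordinal.lift.{u_1+1} (β + 1) := by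
    have emb : srel ↪r ThetaZ.IioLT (β + 1) :=
      RelEmbedding.ofMonotone
        (fun a => ⟨a.1, by
          rcases a.2 with ⟨_, h2⟩ | ⟨he, _⟩
          · exact lt_of_le_of_lt h2 (lt_add_one β)
          · rw [Set.mem_Iio, he]; exact lt_trans hαβ (lt_add_one β)⟩)
        (fun a b h => h)
    calc Ordinal.type srel ≤ Ordinal.type (ThetaZ.IioLT (β + 1)) := emb.ordinal_type_le
      _ = Ordinal.lift.{u_1+1} (β + 1) := ThetaZ.type_IioLT (β + 1)
  have hεlt' : Ordinal.typein srel m < Ordinal.lift.{u_1+1} (β + 1) :=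
    lt_of_lt_of_le (Ordinal.typein_lt_type srel m) htle
  obtain ⟨ε, hεβ, hεlift⟩ := Ordinal.lt_lift_iff.mp hεlt'
  have hβ1B : β + 1 < (Order.succ γ.card).ord := by
    have hω : Cardinal.aleph0 ≤ Order.succ γ.card :=
      le_trans (Ordinal.aleph0_le_card.mpr (Ordinal.omega0_le_of_isSuccLimit hlim))
        (Order.le_succ _)
    have hBlim := Cardinal.isSuccLimit_ord hω
    rw [Ordinal.add_one_eq_succ]
    exact hBlim.succ_lt hβ
  have hεB : ε < (Order.succ γ.card).ord := lt_trans hεβ hβ1B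
  obtain ⟨E⟩ := ThetaZ.mainTheta hγ hlim hκγ ε hεB
  have eS := ThetaZ.enumIso srel
  have hlift1 : Ordinal.lift.{u_1+1} ε + 1 = Ordinal.lift.{u_1+1} (ε + 1) := by
    rw [Ordinal.lift_add, Ordinal.lift_one]
  rw [hts, ← hεlift, hlift1] at eS
  have eS' : srel ≃r ThetaZ.IioLT (ε + 1) := eS.trans (ThetaZ.liftIio (ε + 1))
  exact ⟨E.trans (ThetaZ.lastDiffCongr (RelIso.refl _) eS'.symm)⟩
end

section
/- Let γ be an ordinal closed under ordinal addition which is not a cardinal. If α < |γ|⁺ is a successor ordinal, where |γ|⁺ is the successor cardinal of the cardinality of γ, then θ_γ is order isomorphic to θ_γ × α. -/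
namespace ThetaAux

open Ordinal

lemma thetaLt_nil_left (y : List Ordinal) : ¬ thetaLt [] y := by
  rintro (⟨h, hne⟩ | ⟨n, hx, hy, _⟩)
  · exact hne (List.prefix_nil.mp h)
  · exact absurd hx (by simp)

lemma thetaLt_nil_right {x : List Ordinal} (h : x ≠ []) : thetaLt x [] :=
  Or.inl ⟨List.nil_prefix, Ne.symm h⟩

lemma thetaLt_cons_cons {a b : Ordinal} {s t : List Ordinal} :
    thetaLt (a::s) (b::t) ↔ a < b ∨ (a = b ∧ thetaLt s t) := by
  constructor
  · rintro (⟨hp, hne⟩ | ⟨n, hx, hy, htake, hget⟩)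
    · rw [List.cons_prefix_cons] at hp
      obtain ⟨rfl, hp2⟩ := hp
      refine Or.inr ⟨rfl, Or.inl ⟨hp2, ?_⟩⟩
      intro h; exact hne (by rw [h])
    · cases n with
      | zero => exact Or.inl (by simpa using hget)
      | succ k =>
        simp only [List.take_succ_cons, List.cons.injEq] at htake
        obtain ⟨rfl, htake2⟩ := htake
        refine Or.inr ⟨rfl, Or.inr ⟨k, by simpa using hx, by simpa using hy, htake2, ?_⟩⟩
        simpa using hget
  · rintro (hab | ⟨rfl, (⟨hp, hne⟩ | ⟨n, hx, hy, htake, hget⟩)⟩)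
    · exact Or.inr ⟨0, by simp, by simp, by simp, by simpa using hab⟩
    · exact Or.inl ⟨List.cons_prefix_cons.mpr ⟨rfl, hp⟩, by simpa using hne⟩
    · exact Or.inr ⟨n+1, by simpa using hx, by simpa using hy, by simpa using htake,
        by simpa using hget⟩

lemma thetaLt_irrefl (x : List Ordinal) : ¬ thetaLt x x := by
  induction x with
  | nil => exact thetaLt_nil_left _
  | cons a s ih =>
    rw [thetaLt_cons_cons]
    rintro (h | ⟨-, h⟩)
    · exact lt_irrefl _ h
    · exact ih h

lemma thetaLt_trans : ∀ {x y z : List Ordinal}, thetaLt x y → thetaLt y z → thetaLt x z := by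
  intro x
  induction x with
  | nil => intro y z h; exact absurd h (thetaLt_nil_left _)
  | cons a s ih =>
    rintro (_ | ⟨b, t⟩) z h hyz
    · exact absurd hyz (thetaLt_nil_left _)
    · rcases z with _ | ⟨c, u⟩
      · exact thetaLt_nil_right (by simp)
      · rw [thetaLt_cons_cons] at h hyz ⊢
        rcases h with h | ⟨rfl, h⟩ <;> rcases hyz with h' | ⟨rfl, h'⟩
        · exact Or.inl (h.trans h')
        · exact Or.inl h
        · exact Or.inl h'
        · exact Or.inr ⟨rfl, ih h h'⟩

lemma thetaLt_trichotomy : ∀ (x y : List Ordinal), thetaLt x y ∨ x = y ∨ thetaLt y x := by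
  intro x
  induction x with
  | nil =>
    rintro (_ | ⟨b, t⟩)
    · exact Or.inr (Or.inl rfl)
    · exact Or.inr (Or.inr (thetaLt_nil_right (by simp)))
  | cons a s ih =>
    rintro (_ | ⟨b, t⟩)
    · exact Or.inl (thetaLt_nil_right (by simp))
    · rcases lt_trichotomy a b with h | rfl | h
      · exact Or.inl (thetaLt_cons_cons.mpr (Or.inl h))
      · rcases ih t with h | rfl | h
        · exact Or.inl (thetaLt_cons_cons.mpr (Or.inr ⟨rfl, h⟩))
        · exact Or.inr (Or.inl rfl)
        · exact Or.inr (Or.inr (thetaLt_cons_cons.mpr (Or.inr ⟨rfl, h⟩)))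
      · exact Or.inr (Or.inr (thetaLt_cons_cons.mpr (Or.inl h)))

def shiftList (l : Ordinal) : List Ordinal → List Ordinal
  | [] => []
  | (ξ :: s) => (l + ξ) :: s

lemma thetaLt_cons_same {a : Ordinal} {s t : List Ordinal} :
    thetaLt (a::s) (a::t) ↔ thetaLt s t := by
  rw [thetaLt_cons_cons]
  constructor
  · rintro (h | ⟨-, h⟩)
    · exact absurd h (lt_irrefl _)
    · exact h
  · exact fun h => Or.inr ⟨rfl, h⟩

lemma thetaLt_shift (l : Ordinal) {x y : List Ordinal} :
    thetaLt (shiftList l x) (shiftList l y) ↔ thetaLt x y := by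
  rcases x with _ | ⟨a, s⟩ <;> rcases y with _ | ⟨b, t⟩
  · simp only [shiftList]
  · simp only [shiftList]
    constructor <;> exact fun h => absurd h (thetaLt_nil_left _)
  · simp only [shiftList]
    constructor <;> exact fun _ => thetaLt_nil_right (by simp)
  · simp only [shiftList, thetaLt_cons_cons]
    constructor
    · rintro (h | ⟨he, h⟩)
      · exact Or.inl (lt_of_add_lt_add_left h)
      · exact Or.inr ⟨add_left_cancel_iff.mp he, h⟩
    · rintro (h | ⟨rfl, h⟩)
      · exact Or.inl ((add_lt_add_iff_left l).mpr h)
      · exact Or.inr ⟨rfl, h⟩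

/-! ### Carrier-level helpers -/

def tcons {γ : Ordinal} (ξ : Ordinal) (hξ : ξ < γ) (x : ThetaCarrier γ) : ThetaCarrier γ :=
  ⟨ξ :: x.1, by
    intro o ho
    rcases List.mem_cons.mp ho with rfl | h
    · exact hξ
    · exact x.2 o h⟩

def behead {γ : Ordinal} (x : ThetaCarrier γ) : ThetaCarrier γ :=
  ⟨x.1.tail, fun o ho => x.2 o (List.mem_of_mem_tail ho)⟩

def tshift {γ : Ordinal} (l : Ordinal) (hl : l < γ)
    (hγ : ∀ δ < γ, ∀ δ' < γ, δ + δ' < γ) (x : ThetaCarrier γ) : ThetaCarrier γ :=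
  ⟨shiftList l x.1, by
    rcases x with ⟨lx, hlx⟩
    rcases lx with _ | ⟨ξ, s⟩
    · intro o ho; exact absurd ho (by simp [shiftList])
    · intro o ho
      rcases List.mem_cons.mp ho with rfl | h
      · exact hγ l hl ξ (hlx ξ (by simp))
      · exact hlx o (by simp [h])⟩

/-! ### The partition scheme -/

def Scheme (γ β : Ordinal) : Prop :=
  ∃ p : ThetaCarrier γ → Ordinal,
    (∀ x, p x ≤ β) ∧
    (∀ x y, thetaRel γ x y → p x ≤ p y) ∧
    (∀ a, a ≤ β → ∃ g : ThetaCarrier γ → ThetaCarrier γ,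
      (∀ x, p (g x) = a) ∧
      (∀ x y, thetaRel γ x y ↔ thetaRel γ (g x) (g y)) ∧
      (∀ y, p y = a → ∃ x, g x = y))

end ThetaAux

namespace ThetaAux

open Ordinal
open scoped Classical

lemma lt_add_one' (o : Ordinal) : o < o + 1 := by
  rw [Ordinal.add_one_eq_succ]; exact Order.lt_succ o

lemma lt_add_one_iff' {a b : Ordinal} : a < b + 1 ↔ a ≤ b := by
  rw [Ordinal.add_one_eq_succ, Order.lt_succ_iff]

lemma add_one_le_iff' {a b : Ordinal} : a + 1 ≤ b ↔ a < b := by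
  rw [Ordinal.add_one_eq_succ, Order.succ_le_iff]

theorem scheme_all (γ : Ordinal) (hγ : ∀ δ < γ, ∀ δ' < γ, δ + δ' < γ)
    (h1 : 1 < γ) (hcard : γ.card.ord < γ) :
    ∀ β : Ordinal, β.card ≤ γ.card → Scheme γ β := by
  intro β
  induction β using Ordinal.induction with
  | h β IH =>
  intro hβ
  have h0 : (0 : Ordinal) < γ := zero_lt_one.trans h1
  rcases Ordinal.zero_or_succ_or_isSuccLimit β with rfl | ⟨β', rfl⟩ | hlim
  · -- β = 0
    refine ⟨fun _ => 0, fun _ => le_rfl, fun _ _ _ => le_rfl, fun a ha => ?_⟩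
    have : a = 0 := nonpos_iff_eq_zero.mp ha
    subst this
    exact ⟨id, fun _ => rfl, fun _ _ => Iff.rfl, fun y _ => ⟨y, rfl⟩⟩
  · -- β = Order.succ β'
    obtain ⟨p, hbd, hmono, hfib⟩ :=
      IH β' (Order.lt_succ β') (le_trans (card_le_card (Order.le_succ β')) hβ)
    set P : ThetaCarrier γ → Ordinal :=
      fun x => if x.1 ≠ [] ∧ x.1.headI = 0 then p (behead x) else Order.succ β' with hPdef
    have Pnil : ∀ (h), P ⟨[], h⟩ = Order.succ β' := by
      intro h; simp [hPdef]
    have Pcons0 : ∀ s (h), P ⟨0::s, h⟩ = p (behead ⟨0::s, h⟩) := by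
      intro s h; simp [hPdef]
    have PconsNe : ∀ b s (h), b ≠ 0 → P ⟨b::s, h⟩ = Order.succ β' := by
      intro b s h hb; simp [hPdef, hb]
    have hPbd : ∀ x, P x ≤ Order.succ β' := by
      rintro ⟨lx, hlx⟩
      rcases lx with _ | ⟨b, s⟩
      · rw [Pnil]
      · by_cases hb : b = 0
        · subst hb; rw [Pcons0]; exact (hbd _).trans (Order.le_succ β')
        · rw [PconsNe _ _ _ hb]
    refine ⟨P, hPbd, ?_, ?_⟩
    · -- monotone
      rintro ⟨lx, hlx⟩ ⟨ly, hly⟩ hxy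
      have hxy' : thetaLt lx ly := hxy
      rcases lx with _ | ⟨b, s⟩
      · exact absurd hxy' (thetaLt_nil_left _)
      · rcases ly with _ | ⟨c, t⟩
        · rw [Pnil]; exact hPbd _
        · rcases thetaLt_cons_cons.mp hxy' with hbc | ⟨rfl, hst⟩
          · have hc : c ≠ 0 := by
              intro h; subst h
              exact absurd hbc (by simp [not_lt_zero])
            rw [PconsNe _ _ _ hc]; exact hPbd _
          · by_cases hb : b = 0
            · subst hb; rw [Pcons0, Pcons0]
              exact hmono _ _ hst
            · rw [PconsNe _ _ _ hb, PconsNe _ _ _ hb]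
    · -- fibers
      intro a ha
      rcases eq_or_lt_of_le ha with rfl | halt
      · -- top fiber, shift by 1
        refine ⟨tshift 1 h1 hγ, ?_, ?_, ?_⟩
        · rintro ⟨lx, hlx⟩
          rcases lx with _ | ⟨ξ, s⟩
          · exact Pnil _
          · exact PconsNe _ _ _ (ne_of_gt (lt_of_lt_of_le zero_lt_one (le_add_right (le_refl 1))))
        · intro x y; exact (thetaLt_shift 1).symm
        · rintro ⟨ly, hly⟩ hpy
          rcases ly with _ | ⟨b, t⟩
          · exact ⟨⟨[], hly⟩, Subtype.ext rfl⟩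
          · by_cases hb : b = 0
            · subst hb; rw [Pcons0] at hpy
              exact absurd hpy (((hbd _).trans_lt (Order.lt_succ β')).ne)
            · have h1b : 1 ≤ b := Ordinal.one_le_iff_ne_zero.mpr hb
              refine ⟨⟨(b-1)::t, ?_⟩, ?_⟩
              · intro o ho
                rcases List.mem_cons.mp ho with rfl | h
                · exact (Ordinal.sub_le_self b 1).trans_lt (hly b (by simp))
                · exact hly o (by simp [h])
              · apply Subtype.ext
                show shiftList 1 ((b-1)::t) = b::t
                simp [shiftList, Ordinal.add_sub_cancel_of_le h1b]
      · -- lower fiber via cons 0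
        have haβ' : a ≤ β' := Order.lt_succ_iff.mp halt
        obtain ⟨g, hg1, hg2, hg3⟩ := hfib a haβ'
        refine ⟨fun x => tcons 0 h0 (g x), ?_, ?_, ?_⟩
        · intro x
          have : P (tcons 0 h0 (g x)) = p (behead (tcons 0 h0 (g x))) := Pcons0 _ _
          rw [this]
          have : behead (tcons 0 h0 (g x)) = g x := Subtype.ext rfl
          rw [this]; exact hg1 x
        · intro x y
          exact (hg2 x y).trans (thetaLt_cons_same).symm
        · rintro ⟨ly, hly⟩ hpy
          rcases ly with _ | ⟨b, t⟩
          · rw [Pnil] at hpy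
            exact absurd hpy.symm halt.ne
          · by_cases hb : b = 0
            · subst hb
              rw [Pcons0] at hpy
              obtain ⟨x, hx⟩ := hg3 _ hpy
              refine ⟨x, Subtype.ext ?_⟩
              show 0 :: (g x).1 = 0 :: t
              rw [hx]; rfl
            · rw [PconsNe _ _ _ hb] at hpy
              exact absurd hpy.symm halt.ne
  · -- β limit
    have hβlt : ∀ {a}, a < β → a.card ≤ γ.card := fun h => le_trans (card_le_card h.le) hβ
    set lam := β.cof.ord with hlamdef
    have hlamγ : lam < γ :=
      lt_of_le_of_lt (le_trans (Cardinal.ord_le_ord.mpr (Ordinal.cof_le_card β)) (Cardinal.ord_le_ord.mpr hβ)) hcard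
    obtain ⟨f, hf⟩ := Ordinal.exists_fundamental_sequence β
    set fhat : Ordinal → Ordinal := fun i => if h : i < lam then f i h else 0 with hfhatdef
    set B : Ordinal → Ordinal := fun i => Ordinal.blsub i (fun j _ => fhat j) with hBdef
    have Bmono : ∀ {i j : Ordinal}, i ≤ j → B i ≤ B j := by
      intro i j h
      exact Ordinal.blsub_le_iff.mpr fun k hk => Ordinal.lt_blsub _ k (hk.trans_le h)
    have hfeq : ∀ i (hi : i < lam), fhat i = f i hi := fun i hi => dif_pos hi
    have fmono : ∀ i j (hi : i < lam) (hj : j < lam), i < j → fhat i < fhat j := by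
      intro i j hi hj hij
      rw [hfeq i hi, hfeq j hj]
      exact hf.2.1 hi hj hij
    have Blef : ∀ i, i < lam → B i ≤ fhat i := by
      intro i hi
      exact Ordinal.blsub_le_iff.mpr fun j hj => fmono j i (hj.trans hi) hi hj
    have hfltβ : ∀ i (hi : i < lam), fhat i < β := by
      intro i hi
      rw [hfeq i hi, ← hf.blsub_eq]
      exact Ordinal.lt_blsub f i hi
    have Bsucc : ∀ i, i < lam → B (i+1) = fhat i + 1 := by
      intro i hi
      apply le_antisymm
      · apply Ordinal.blsub_le_iff.mpr
        intro j hj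
        have hji : j ≤ i := lt_add_one_iff'.mp hj
        rcases eq_or_lt_of_le hji with rfl | hj'
        · exact lt_add_one' _
        · exact (fmono j i (hj'.trans hi) hi hj').trans (lt_add_one' _)
      · exact add_one_le_iff'.mpr (Ordinal.lt_blsub _ i (lt_add_one' i))
    have Blam : B lam = β := by
      apply le_antisymm
      · exact Ordinal.blsub_le_iff.mpr fun i hi => hfltβ i hi
      · rw [← hf.blsub_eq]
        apply Ordinal.blsub_le_iff.mpr
        intro i hi
        rw [← hfeq i hi]
        exact Ordinal.lt_blsub _ i hi
    have hBsuccβ : ∀ i, i < lam → B (i+1) ≤ β := by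
      intro i hi
      rw [← Blam]
      exact Bmono (add_one_le_iff'.mpr hi)
    have hdelta : ∀ i, i < lam → B i + ((fhat i - B i) + 1) = B (i+1) := by
      intro i hi
      rw [← add_assoc, Ordinal.add_sub_cancel_of_le (Blef i hi), Bsucc i hi]
    have hdeltaβ : ∀ i, i < lam → fhat i - B i < β :=
      fun i hi => (Ordinal.sub_le_self _ _).trans_lt (hfltβ i hi)
    have SC : ∀ i (hi : i < lam), Scheme γ (fhat i - B i) :=
      fun i hi => IH _ (hdeltaβ i hi) (hβlt (hdeltaβ i hi))
    set Pf : Ordinal → ThetaCarrier γ → Ordinal :=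
      fun i => if hi : i < lam then (SC i hi).choose else fun _ => 0 with hPfdef
    have Pfspec : ∀ i (hi : i < lam),
        (∀ x, Pf i x ≤ fhat i - B i) ∧
        (∀ x y, thetaRel γ x y → Pf i x ≤ Pf i y) ∧
        (∀ a, a ≤ fhat i - B i → ∃ g : ThetaCarrier γ → ThetaCarrier γ,
          (∀ x, Pf i (g x) = a) ∧
          (∀ x y, thetaRel γ x y ↔ thetaRel γ (g x) (g y)) ∧
          (∀ y, Pf i y = a → ∃ x, g x = y)) := by
      intro i hi
      have : Pf i = (SC i hi).choose := dif_pos hi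
      rw [this]
      exact (SC i hi).choose_spec
    set P : ThetaCarrier γ → Ordinal :=
      fun x => if x.1 ≠ [] ∧ x.1.headI < lam then B x.1.headI + Pf x.1.headI (behead x) else β
      with hPdef
    have Pnil : ∀ (h), P ⟨[], h⟩ = β := by intro h; simp [hPdef]
    have Pcons_lt : ∀ b t (h), b < lam → P ⟨b::t, h⟩ = B b + Pf b (behead ⟨b::t, h⟩) := by
      intro b t h hb; simp [hPdef, hb]
    have Pcons_ge : ∀ b t (h), ¬ b < lam → P ⟨b::t, h⟩ = β := by
      intro b t h hb; simp [hPdef, hb]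
    have hPconsβ : ∀ b t (h), b < lam → P ⟨b::t, h⟩ < β := by
      intro b t h hb
      rw [Pcons_lt b t h hb]
      calc B b + Pf b (behead ⟨b::t, h⟩) ≤ B b + (fhat b - B b) :=
            (add_le_add_iff_left _).mpr ((Pfspec b hb).1 _)
        _ < B b + ((fhat b - B b) + 1) := (add_lt_add_iff_left _).mpr (lt_add_one' _)
        _ = B (b+1) := hdelta b hb
        _ ≤ β := hBsuccβ b hb
    have hPbd : ∀ x, P x ≤ β := by
      rintro ⟨lx, hlx⟩
      rcases lx with _ | ⟨b, t⟩
      · rw [Pnil]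
      · by_cases hb : b < lam
        · exact (hPconsβ b t hlx hb).le
        · rw [Pcons_ge b t hlx hb]
    refine ⟨P, hPbd, ?_, ?_⟩
    · -- monotone
      rintro ⟨lx, hlx⟩ ⟨ly, hly⟩ hxy
      have hxy' : thetaLt lx ly := hxy
      rcases lx with _ | ⟨b, s⟩
      · exact absurd hxy' (thetaLt_nil_left _)
      · rcases ly with _ | ⟨c, t⟩
        · rw [Pnil]; exact hPbd _
        · rcases thetaLt_cons_cons.mp hxy' with hbc | ⟨rfl, hst⟩
          · by_cases hc : c < lam
            · have hb : b < lam := hbc.trans hc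
              rw [Pcons_lt b s hlx hb, Pcons_lt c t hly hc]
              refine le_of_lt ?_
              calc B b + Pf b (behead ⟨b::s, hlx⟩) ≤ B b + (fhat b - B b) :=
                    (add_le_add_iff_left _).mpr ((Pfspec b hb).1 _)
                _ < B b + ((fhat b - B b) + 1) := (add_lt_add_iff_left _).mpr (lt_add_one' _)
                _ = B (b+1) := hdelta b hb
                _ ≤ B c := Bmono (add_one_le_iff'.mpr hbc)
                _ ≤ B c + Pf c (behead ⟨c::t, hly⟩) := le_add_right le_rfl
            · rw [Pcons_ge c t hly hc]; exact hPbd _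
          · by_cases hb : b < lam
            · rw [Pcons_lt b s hlx hb, Pcons_lt b t hly hb]
              exact (add_le_add_iff_left _).mpr ((Pfspec b hb).2.1 (behead ⟨b::s, hlx⟩) (behead ⟨b::t, hly⟩) hst)
            · rw [Pcons_ge b s hlx hb, Pcons_ge b t hly hb]
    · -- fibers
      intro a ha
      rcases eq_or_lt_of_le ha with rfl | haβ
      · -- top fiber : shift by lam
        refine ⟨tshift lam hlamγ hγ, ?_, ?_, ?_⟩
        · rintro ⟨lx, hlx⟩
          rcases lx with _ | ⟨ξ, s⟩
          · exact Pnil _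
          · exact Pcons_ge _ _ _ (not_lt.mpr (le_add_right (le_refl lam)))
        · intro x y; exact (thetaLt_shift lam).symm
        · rintro ⟨ly, hly⟩ hpy
          rcases ly with _ | ⟨b, t⟩
          · exact ⟨⟨[], hly⟩, Subtype.ext rfl⟩
          · by_cases hb : b < lam
            · exact absurd hpy (hPconsβ b t hly hb).ne
            · have hlb : lam ≤ b := not_lt.mp hb
              refine ⟨⟨(b-lam)::t, ?_⟩, ?_⟩
              · intro o ho
                rcases List.mem_cons.mp ho with rfl | h
                · exact (Ordinal.sub_le_self b lam).trans_lt (hly b (by simp))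
                · exact hly o (by simp [h])
              · apply Subtype.ext
                show shiftList lam ((b-lam)::t) = b::t
                simp [shiftList, Ordinal.add_sub_cancel_of_le hlb]
      · -- fiber a < β
        set S : Set Ordinal := {i | B i ≤ a} with hSdef
        have hS0 : (0 : Ordinal) ∈ S := by
          simp only [hSdef, Set.mem_setOf_eq, hBdef]
          rw [Ordinal.blsub_zero]
          exact zero_le (a := a)
        have hSle : ∀ i ∈ S, i ≤ lam := by
          intro i hi
          by_contra h
          have : B lam ≤ B i := Bmono (le_of_not_ge h)
          rw [Blam] at this
          exact absurd (this.trans hi) (not_le.mpr haβ)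
        have hbdd : BddAbove S := ⟨lam, hSle⟩
        set i0 := sSup S with hi0def
        have hi0S : B i0 ≤ a := by
          apply Ordinal.blsub_le_iff.mpr
          intro j hj
          obtain ⟨s, hsS, hjs⟩ := exists_lt_of_lt_csSup ⟨0, hS0⟩ hj
          calc fhat j < B (j+1) := Ordinal.lt_blsub _ j (lt_add_one' j)
            _ ≤ B s := Bmono (add_one_le_iff'.mpr hjs)
            _ ≤ a := hsS
        have hi0lam : i0 < lam := by
          have hle : i0 ≤ lam := csSup_le ⟨0, hS0⟩ hSle
          rcases eq_or_lt_of_le hle with h | h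
          · exfalso
            rw [h, Blam] at hi0S
            exact absurd hi0S (not_le.mpr haβ)
          · exact h
        have hnot : a < B (i0+1) := by
          by_contra h
          push_neg at h
          have : i0 + 1 ∈ S := h
          have := le_csSup hbdd this
          exact absurd this (not_le.mpr (lt_add_one' i0))
        have hc : B i0 + (a - B i0) = a := Ordinal.add_sub_cancel_of_le hi0S
        have hcle : a - B i0 ≤ fhat i0 - B i0 := by
          have h2 : B i0 + (a - B i0) < B i0 + ((fhat i0 - B i0) + 1) := by
            rw [hdelta i0 hi0lam, hc]; exact hnot
          exact lt_add_one_iff'.mp (lt_of_add_lt_add_left h2)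
        obtain ⟨g, hg1, hg2, hg3⟩ := (Pfspec i0 hi0lam).2.2 (a - B i0) hcle
        refine ⟨fun x => tcons i0 (hi0lam.trans hlamγ) (g x), ?_, ?_, ?_⟩
        · intro x
          have he : P (tcons i0 (hi0lam.trans hlamγ) (g x))
              = B i0 + Pf i0 (behead (tcons i0 (hi0lam.trans hlamγ) (g x))) :=
            Pcons_lt _ _ _ hi0lam
          rw [he]
          have : behead (tcons i0 (hi0lam.trans hlamγ) (g x)) = g x := Subtype.ext rfl
          rw [this, hg1 x, hc]
        · intro x y
          exact (hg2 x y).trans (thetaLt_cons_same).symm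
        · rintro ⟨ly, hly⟩ hpy
          rcases ly with _ | ⟨b, t⟩
          · rw [Pnil] at hpy
            exact absurd hpy.symm haβ.ne
          · by_cases hb : b < lam
            · rw [Pcons_lt b t hly hb] at hpy
              have hbS : b ∈ S := by
                show B b ≤ a
                rw [← hpy]; exact le_add_right le_rfl
              have hble : b ≤ i0 := le_csSup hbdd hbS
              have hi0b : i0 ≤ b := by
                by_contra h
                push_neg at h
                have h2 : B (b+1) ≤ B i0 := Bmono (add_one_le_iff'.mpr h)
                have h3 : a < B (b+1) := by
                  rw [← hpy, ← hdelta b hb]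
                  exact (add_lt_add_iff_left _).mpr (lt_add_one_iff'.mpr ((Pfspec b hb).1 _))
                exact absurd (h3.trans_le (h2.trans hi0S)) (lt_irrefl a)
              have hbi0 : b = i0 := le_antisymm hble hi0b
              subst hbi0
              have hPft : Pf i0 (behead ⟨i0::t, hly⟩) = a - B i0 := by
                have h5 := hpy
                rw [← hc] at h5
                exact add_left_cancel_iff.mp h5
              obtain ⟨x, hx⟩ := hg3 _ hPft
              refine ⟨x, Subtype.ext ?_⟩
              show i0 :: (g x).1 = i0 :: t
              rw [hx]; rfl
            · rw [Pcons_ge b t hly hb] at hpy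
              exact absurd hpy.symm haβ.ne

end ThetaAux



/-- Corollary 2.11: if `γ` is closed under ordinal addition and is not a cardinal,
and `α < |γ|⁺` is a successor ordinal, then `θ_γ` is order isomorphic to `θ_γ × α`. -/
theorem theta_iso_theta_mul_succOrdinal (γ : Ordinal)
    (hγ : ∀ δ < γ, ∀ δ' < γ, δ + δ' < γ)
    (hγcard : γ.card.ord ≠ γ)
    (α : Ordinal) (hα : α < (Order.succ γ.card).ord)
    (hαsucc : ∃ β : Ordinal, α = β + 1) :
    Nonempty
      (thetaRel γ ≃r
        lastDiffRel (thetaRel γ)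
          (fun a b : {o : Ordinal // o < α} => a.1 < b.1)) := by
  classical
  open ThetaAux in
  obtain ⟨β, rfl⟩ := hαsucc
  have hcard : γ.card.ord < γ := lt_of_le_of_ne (Cardinal.ord_card_le γ) hγcard
  have h1 : 1 < γ := by
    by_contra h
    push_neg at h
    rcases Ordinal.le_one_iff.mp h with rfl | rfl
    · exact hγcard (by simp)
    · exact hγcard (by simp)
  have hβcard : β.card ≤ γ.card := by
    have h2 : β < (Order.succ γ.card).ord := lt_trans (ThetaAux.lt_add_one' β) hα
    exact Order.lt_succ_iff.mp (Cardinal.lt_ord.mp h2)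
  obtain ⟨p, hbd, hmono, hfib⟩ := ThetaAux.scheme_all γ hγ h1 hcard β hβcard
  have hle : ∀ a : {o : Ordinal // o < β + 1}, a.1 ≤ β :=
    fun a => ThetaAux.lt_add_one_iff'.mp a.2
  have hG : ∀ a : {o : Ordinal // o < β + 1},
      ∃ g : ThetaCarrier γ → ThetaCarrier γ,
        (∀ x, p (g x) = a.1) ∧
        (∀ x y, thetaRel γ x y ↔ thetaRel γ (g x) (g y)) ∧
        (∀ y, p y = a.1 → ∃ x, g x = y) :=
    fun a => hfib a.1 (hle a)
  choose G hG1 hG2 hG3 using hG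
  set F : ThetaCarrier γ × {o : Ordinal // o < β + 1} → ThetaCarrier γ :=
    fun z => G z.2 z.1 with hF
  have cross : ∀ (a b : {o : Ordinal // o < β + 1}) x y,
      a.1 < b.1 → thetaRel γ (G a x) (G b y) := by
    intro a b x y hab
    rcases ThetaAux.thetaLt_trichotomy (G a x).1 (G b y).1 with h | h | h
    · exact h
    · exfalso
      have he : G a x = G b y := Subtype.ext h
      have : a.1 = b.1 := by rw [← hG1 a x, ← hG1 b y, he]
      exact absurd hab (this ▸ lt_irrefl _)
    · exfalso
      have h2 := hmono _ _ h
      rw [hG1, hG1] at h2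
      exact absurd hab (not_lt.mpr h2)
  have main : ∀ z w : ThetaCarrier γ × {o : Ordinal // o < β + 1},
      lastDiffRel (thetaRel γ) (fun a b : {o : Ordinal // o < β + 1} => a.1 < b.1) z w ↔
        thetaRel γ (F z) (F w) := by
    rintro ⟨zx, za⟩ ⟨wx, wa⟩
    constructor
    · rintro (h | ⟨heq, hr⟩)
      · exact cross _ _ _ _ h
      · simp only at heq
        subst heq
        exact (hG2 za zx wx).mp hr
    · intro h
      rcases lt_trichotomy za.1 wa.1 with hlt | heq | hgt
      · exact Or.inl hlt
      · have he : za = wa := Subtype.ext heq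
        subst he
        exact Or.inr ⟨rfl, (hG2 za zx wx).mpr h⟩
      · exfalso
        have h2 := cross wa za wx zx hgt
        exact ThetaAux.thetaLt_irrefl _ (ThetaAux.thetaLt_trans h h2)
  have hinj : Function.Injective F := by
    rintro ⟨zx, za⟩ ⟨wx, wa⟩ h
    have hpa : za.1 = wa.1 := by
      rw [← hG1 za zx, ← hG1 wa wx]
      exact congrArg p h
    have h2 : za = wa := Subtype.ext hpa
    subst h2
    have h3 : G za zx = G za wx := h
    have : zx = wx := by
      rcases ThetaAux.thetaLt_trichotomy zx.1 wx.1 with hlt | he | hgt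
      · exfalso
        have h4 := (hG2 za zx wx).mp hlt
        rw [h3] at h4
        exact ThetaAux.thetaLt_irrefl _ h4
      · exact Subtype.ext he
      · exfalso
        have h4 := (hG2 za wx zx).mp hgt
        rw [h3] at h4
        exact ThetaAux.thetaLt_irrefl _ h4
    rw [this]
  have hsurj : Function.Surjective F := by
    intro y
    have hlt : p y < β + 1 := ThetaAux.lt_add_one_iff'.mpr (hbd y)
    obtain ⟨x, hx⟩ := hG3 ⟨p y, hlt⟩ y rfl
    exact ⟨(x, ⟨p y, hlt⟩), hx⟩
  let e := Equiv.ofBijective F ⟨hinj, hsurj⟩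
  exact ⟨(RelIso.mk e (fun {z w} => (main z w).symm)).symm⟩
end
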